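/- arXiv:2306.10132 — 2 statements merged into one kernel-verified Lean document; each statement's English description precedes it below -/
import Mathlib

section
/- If a signed graph Σ contains a triangle whose product of edge signs is negative, then bdim(Σ) ≥ 3. -/
open Finset
open scoped Classical

/-- A signed graph: a simple graph together with a ±1 sign on each edge. -/
structure SGraph (V : Type*) where
  G : SimpleGraph V
  sign : V → V → ℤ
  sign_symm : ∀ u v, sign u v = sign v u
  sign_mem : ∀ u v, G.Adj u v → sign u v = 1 ∨ sign u v = -1

variable {V V1 V2 W : Type*}

/-- `ζ` is a positive k-switching function for the signed graph `S`. -/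
def IsPosSwitching [Fintype V] (S : SGraph V) (k : ℕ) (ζ : V → Fin k → ℤ) : Prop :=
  (∀ v i, ζ v i = -1 ∨ ζ v i = 0 ∨ ζ v i = 1) ∧
  (∀ u v, S.G.Adj u v → (∑ i, ζ u i * ζ v i) ≠ 0) ∧
  (∀ u v, S.G.Adj u v → S.sign u v * Int.sign (∑ i, ζ u i * ζ v i) = 1)

def HasPosSwitching [Fintype V] (S : SGraph V) (k : ℕ) : Prop :=
  ∃ ζ : V → Fin k → ℤ, IsPosSwitching S k ζ

/-- The balancing dimension: least `k ≥ 1` admitting a positive k-switching function. -/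
noncomputable def bdim [Fintype V] (S : SGraph V) : ℕ :=
  sInf {k | 1 ≤ k ∧ HasPosSwitching S k}

/-- A signed graph is balanced iff it can be switched to all-positive by a 1-switching. -/
def SGraph.Balanced [Fintype V] (S : SGraph V) : Prop := HasPosSwitching S 1

/-- The negation of a signed graph. -/
def SGraph.neg (S : SGraph V) : SGraph V where
  G := S.G
  sign := fun u v => - S.sign u v
  sign_symm := fun u v => by rw [S.sign_symm]
  sign_mem := fun u v h => by rcases S.sign_mem u v h with h1 | h1 <;> simp [h1]

def SGraph.Antibalanced [Fintype V] (S : SGraph V) : Prop := S.neg.Balanced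

/-- Switching equivalence of signed graphs. -/
def SwitchEquiv (S1 S2 : SGraph V) : Prop :=
  S1.G = S2.G ∧ ∃ η : V → ℤ, (∀ v, η v = 1 ∨ η v = -1) ∧
    ∀ u v, S1.G.Adj u v → S2.sign u v = η u * S1.sign u v * η v

/-- The Cartesian product of signed graphs. -/
noncomputable def cartProd (S1 : SGraph V1) (S2 : SGraph V2) : SGraph (V1 × V2) where
  G := S1.G □ S2.G
  sign := fun p q => if p.2 = q.2 then S1.sign p.1 q.1 else S2.sign p.2 q.2
  sign_symm := by
    intro u v
    rcases eq_or_ne u.2 v.2 with h | h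
    · rw [if_pos h, if_pos h.symm, S1.sign_symm]
    · rw [if_neg h, if_neg (Ne.symm h), S2.sign_symm]
  sign_mem := by
    intro u v h
    rcases (SimpleGraph.boxProd_adj.mp h) with ⟨h1, h2⟩ | ⟨h1, h2⟩
    · rw [if_pos h2]; exact S1.sign_mem _ _ h1
    · rw [if_neg h1.ne]; exact S2.sign_mem _ _ h1
/-- The HG-lexicographic product of signed graphs. -/
noncomputable def lexHG (S1 : SGraph V1) (S2 : SGraph V2) : SGraph (V1 × V2) where
  G := { Adj := fun p q => S1.G.Adj p.1 q.1 ∨ (p.1 = q.1 ∧ S2.G.Adj p.2 q.2)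
         symm := by
           constructor
           rintro p q (h | ⟨h1, h2⟩)
           · exact Or.inl h.symm
           · exact Or.inr ⟨h1.symm, h2.symm⟩
         loopless := by
           constructor
           rintro p (h | ⟨_, h⟩)
           · exact S1.G.irrefl h
           · exact S2.G.irrefl h }
  sign := fun p q => if p.1 = q.1 then S2.sign p.2 q.2 else S1.sign p.1 q.1
  sign_symm := by
    intro u v
    rcases eq_or_ne u.1 v.1 with h | h
    · rw [if_pos h, if_pos h.symm, S2.sign_symm]
    · rw [if_neg h, if_neg (Ne.symm h), S1.sign_symm]
  sign_mem := by
    rintro p q (h | ⟨h1, h2⟩)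
    · rw [if_neg h.ne]; exact S1.sign_mem _ _ h
    · rw [if_pos h1]; exact S2.sign_mem _ _ h2

/-- The BCD-lexicographic product of signed graphs. -/
noncomputable def lexBCD (S1 : SGraph V1) (S2 : SGraph V2) : SGraph (V1 × V2) where
  G := { Adj := fun p q => S1.G.Adj p.1 q.1 ∨ (p.1 = q.1 ∧ S2.G.Adj p.2 q.2)
         symm := by
           constructor
           rintro p q (h | ⟨h1, h2⟩)
           · exact Or.inl h.symm
           · exact Or.inr ⟨h1.symm, h2.symm⟩
         loopless := by
           constructor
           rintro p (h | ⟨_, h⟩)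
           · exact S1.G.irrefl h
           · exact S2.G.irrefl h }
  sign := fun p q =>
    if S2.G.Adj p.2 q.2 then
      (if S1.G.Adj p.1 q.1 then S1.sign p.1 q.1 * S2.sign p.2 q.2 else S2.sign p.2 q.2)
    else S1.sign p.1 q.1
  sign_symm := by
    intro u v
    rw [S1.G.adj_comm v.1 u.1, S2.G.adj_comm v.2 u.2, S1.sign_symm v.1 u.1,
      S2.sign_symm v.2 u.2]
  sign_mem := by
    rintro p q (h | ⟨h1, h2⟩)
    · by_cases h2 : S2.G.Adj p.2 q.2
      · rw [if_pos h2, if_pos h]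
        rcases S1.sign_mem _ _ h with e1 | e1 <;> rcases S2.sign_mem _ _ h2 with e2 | e2 <;>
          simp [e1, e2]
      · rw [if_neg h2]; exact S1.sign_mem _ _ h
    · rw [if_pos h2, if_neg (h1 ▸ S1.G.irrefl)]
      exact S2.sign_mem _ _ h2

/-- The tensor product of signed graphs. -/
def tensorProd (S1 : SGraph V1) (S2 : SGraph V2) : SGraph (V1 × V2) where
  G := { Adj := fun p q => S1.G.Adj p.1 q.1 ∧ S2.G.Adj p.2 q.2
         symm := ⟨fun p q ⟨h1, h2⟩ => ⟨h1.symm, h2.symm⟩⟩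
         loopless := ⟨fun p ⟨h1, _⟩ => S1.G.irrefl h1⟩ }
  sign := fun p q => S1.sign p.1 q.1 * S2.sign p.2 q.2
  sign_symm := by
    intro u v
    rw [S1.sign_symm, S2.sign_symm]
  sign_mem := by
    rintro p q ⟨h1, h2⟩
    rcases S1.sign_mem _ _ h1 with e1 | e1 <;> rcases S2.sign_mem _ _ h2 with e2 | e2 <;>
      simp [e1, e2]

/-- The strong product of signed graphs. -/
noncomputable def strongProd (S1 : SGraph V1) (S2 : SGraph V2) : SGraph (V1 × V2) where
  G := { Adj := fun p q => (S1.G.Adj p.1 q.1 ∧ p.2 = q.2) ∨ (p.1 = q.1 ∧ S2.G.Adj p.2 q.2) ∨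
           (S1.G.Adj p.1 q.1 ∧ S2.G.Adj p.2 q.2)
         symm := by
           constructor
           rintro p q (⟨h1, h2⟩ | ⟨h1, h2⟩ | ⟨h1, h2⟩)
           · exact Or.inl ⟨h1.symm, h2.symm⟩
           · exact Or.inr (Or.inl ⟨h1.symm, h2.symm⟩)
           · exact Or.inr (Or.inr ⟨h1.symm, h2.symm⟩)
         loopless := by
           constructor
           rintro p (⟨h1, _⟩ | ⟨_, h2⟩ | ⟨h1, _⟩)
           · exact S1.G.irrefl h1
           · exact S2.G.irrefl h2
           · exact S1.G.irrefl h1 }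
  sign := fun p q =>
    if p.1 = q.1 then S2.sign p.2 q.2
    else if p.2 = q.2 then S1.sign p.1 q.1
    else S1.sign p.1 q.1 * S2.sign p.2 q.2
  sign_symm := by
    intro u v
    rcases eq_or_ne u.1 v.1 with h | h
    · rw [if_pos h, if_pos h.symm, S2.sign_symm]
    · rw [if_neg h, if_neg (Ne.symm h)]
      rcases eq_or_ne u.2 v.2 with h' | h'
      · rw [if_pos h', if_pos h'.symm, S1.sign_symm]
      · rw [if_neg h', if_neg (Ne.symm h'), S1.sign_symm, S2.sign_symm]
  sign_mem := by
    rintro p q (⟨h1, h2⟩ | ⟨h1, h2⟩ | ⟨h1, h2⟩)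
    · rw [if_neg h1.ne, if_pos h2]; exact S1.sign_mem _ _ h1
    · rw [if_pos h1]; exact S2.sign_mem _ _ h2
    · rw [if_neg h1.ne, if_neg h2.ne]
      rcases S1.sign_mem _ _ h1 with e1 | e1 <;> rcases S2.sign_mem _ _ h2 with e2 | e2 <;>
        simp [e1, e2]
/-- The cycle on `ZMod n` (vertices `0,1,…,n-1`) with the single negative edge `{0,1}`. -/
noncomputable def Cneg (n : ℕ) : SGraph (ZMod n) where
  G := { Adj := fun i j => i ≠ j ∧ (i - j = 1 ∨ j - i = 1)
         symm := ⟨fun i j ⟨h1, h2⟩ => ⟨h1.symm, h2.symm⟩⟩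
         loopless := ⟨fun i ⟨h1, _⟩ => h1 rfl⟩ }
  sign := fun i j => if (i = 0 ∧ j = 1) ∨ (i = 1 ∧ j = 0) then -1 else 1
  sign_symm := by
    intro u v
    exact if_congr (by tauto) rfl rfl
  sign_mem := by
    intro u v _
    by_cases h : (u = 0 ∧ v = 1) ∨ (u = 1 ∧ v = 0)
    · rw [if_pos h]; exact Or.inr rfl
    · rw [if_neg h]; exact Or.inl rfl

/-- The all-negative complete signed graph on `n` vertices. -/
def Kneg (n : ℕ) : SGraph (Fin n) where
  G := ⊤
  sign := fun _ _ => -1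
  sign_symm := fun _ _ => rfl
  sign_mem := fun _ _ _ => Or.inr rfl

/-- The edgeless signed graph on `k` vertices. -/
def Nk (k : ℕ) : SGraph (Fin k) where
  G := ⊥
  sign := fun _ _ => 1
  sign_symm := fun _ _ => rfl
  sign_mem := fun _ _ h => (h.elim)

/-- The lexicographic product of simple graphs. -/
def lexProdGraph (G : SimpleGraph V1) (H : SimpleGraph V2) : SimpleGraph (V1 × V2) where
  Adj p q := G.Adj p.1 q.1 ∨ (p.1 = q.1 ∧ H.Adj p.2 q.2)
  symm := by
    constructor
    rintro p q (h | ⟨h1, h2⟩)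
    · exact Or.inl h.symm
    · exact Or.inr ⟨h1.symm, h2.symm⟩
  loopless := by
    constructor
    rintro p (h | ⟨_, h⟩)
    · exact G.irrefl h
    · exact H.irrefl h

lemma tri2 (x0 x1 y0 y1 z0 z1 : ℤ)
    (hx0 : x0 = -1 ∨ x0 = 0 ∨ x0 = 1) (hx1 : x1 = -1 ∨ x1 = 0 ∨ x1 = 1)
    (hy0 : y0 = -1 ∨ y0 = 0 ∨ y0 = 1) (hy1 : y1 = -1 ∨ y1 = 0 ∨ y1 = 1)
    (hz0 : z0 = -1 ∨ z0 = 0 ∨ z0 = 1) (hz1 : z1 = -1 ∨ z1 = 0 ∨ z1 = 1) :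
    0 ≤ (x0 * y0 + x1 * y1) * ((y0 * z0 + y1 * z1) * (z0 * x0 + z1 * x1)) := by
  rcases hx0 with rfl | rfl | rfl <;> rcases hx1 with rfl | rfl | rfl <;>
    rcases hy0 with rfl | rfl | rfl <;> rcases hy1 with rfl | rfl | rfl <;>
    rcases hz0 with rfl | rfl | rfl <;> rcases hz1 with rfl | rfl | rfl <;> decide

lemma sgn_eq (s t : ℤ) (hs : s = 1 ∨ s = -1) (h : s * t = 1) : t = s := by
  rcases hs with rfl | rfl <;> omega

theorem stmt5 [Fintype V] (S : SGraph V) (a b c : V)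
    (hab : S.G.Adj a b) (hbc : S.G.Adj b c) (hca : S.G.Adj c a)
    (hneg : S.sign a b * S.sign b c * S.sign c a = -1) :
    3 ≤ bdim S := by
  classical
  have hsab := S.sign_mem a b hab
  have hsbc := S.sign_mem b c hbc
  have hsca := S.sign_mem c a hca
  -- Nonemptiness: an explicit positive switching in dimension card (V × V).
  set n := Fintype.card (V × V) with hn
  let e : V × V ≃ Fin n := Fintype.equivFin (V × V)
  let f : V → V × V → ℤ := fun v p =>
    if v = p.1 ∧ S.G.Adj p.1 p.2 then 1
    else if v = p.2 ∧ S.G.Adj p.1 p.2 then S.sign p.1 p.2 else 0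
  have key : ∀ u v, S.G.Adj u v → ∑ p : V × V, f u p * f v p = 2 * S.sign u v := by
    intro u v huv
    have hne : u ≠ v := huv.ne
    have hz : ∀ p ∈ (Finset.univ : Finset (V × V)), p ∉ ({(u, v), (v, u)} : Finset (V × V)) →
        f u p * f v p = 0 := by
      rintro ⟨x, y⟩ _ hp
      simp only [Finset.mem_insert, Finset.mem_singleton, Prod.mk.injEq, not_or, not_and] at hp
      obtain ⟨hp1, hp2⟩ := hp
      by_cases hadj : S.G.Adj x y
      · by_cases hux : u = x
        · have hvx : v ≠ x := fun h => hne (hux.trans h.symm)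
          have hvy : v ≠ y := fun h => hp1 hux.symm h.symm
          simp [f, hvx, hvy]
        · by_cases huy : u = y
          · have hvx : v ≠ x := fun h => hp2 h.symm huy.symm
            have hvy : v ≠ y := fun h => hne (huy.trans h.symm)
            simp [f, hvx, hvy]
          · simp [f, hux, huy]
      · simp [f, hadj]
    have hsub : ({(u, v), (v, u)} : Finset (V × V)) ⊆ Finset.univ := Finset.subset_univ _
    have : ∑ p : V × V, f u p * f v p = ∑ p ∈ ({(u, v), (v, u)} : Finset (V × V)), f u p * f v p :=
      (Finset.sum_subset hsub hz).symm
    rw [this, Finset.sum_pair (by simp [hne, Prod.ext_iff] : ((u, v) : V × V) ≠ (v, u))]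
    have h1 : f u (u, v) = 1 := by simp [f, huv]
    have h2 : f v (u, v) = S.sign u v := by simp [f, hne.symm, huv]
    have h3 : f u (v, u) = S.sign v u := by simp [f, hne, huv.symm]
    have h4 : f v (v, u) = 1 := by simp [f, huv.symm]
    rw [h1, h2, h3, h4, S.sign_symm v u]
    ring
  have hmem : n ∈ {k | 1 ≤ k ∧ HasPosSwitching S k} := by
    constructor
    · have : Nonempty (V × V) := ⟨(a, b)⟩
      exact Fintype.card_pos
    · refine ⟨fun v i => f v (e.symm i), ?_, ?_, ?_⟩
      · intro v i
        dsimp only [f]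
        split_ifs with h1 h2
        · tauto
        · rcases S.sign_mem _ _ h2.2 with h | h <;> tauto
        · tauto
      · intro u v huv
        have : ∑ i : Fin n, f u (e.symm i) * f v (e.symm i) = ∑ p : V × V, f u p * f v p :=
          Fintype.sum_equiv e.symm _ _ fun i => rfl
        rw [this, key u v huv]
        rcases S.sign_mem u v huv with h | h <;> simp [h]
      · intro u v huv
        have : ∑ i : Fin n, f u (e.symm i) * f v (e.symm i) = ∑ p : V × V, f u p * f v p :=
          Fintype.sum_equiv e.symm _ _ fun i => rfl
        rw [this, key u v huv]
        rcases S.sign_mem u v huv with h | h <;> simp [h] <;> decide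
  refine le_csInf ⟨n, hmem⟩ ?_
  rintro k ⟨hk1, ζ, hval, hnz, hsg⟩
  by_contra hk3
  -- k = 1 or k = 2; pad to dimension 2
  have hk2 : k = 1 ∨ k = 2 := by omega
  set ζ2 : V → Fin 2 → ℤ := fun v i => if h : (i : ℕ) < k then ζ v ⟨i, h⟩ else 0 with hζ2
  have hsum : ∀ u v : V, ∑ i : Fin 2, ζ2 u i * ζ2 v i = ∑ i : Fin k, ζ u i * ζ v i := by
    intro u v
    rcases hk2 with rfl | rfl
    · simp [ζ2, Fin.sum_univ_two, Fin.sum_univ_one]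
    · simp [ζ2, Fin.sum_univ_two]
  have hval2 : ∀ v i, ζ2 v i = -1 ∨ ζ2 v i = 0 ∨ ζ2 v i = 1 := by
    intro v i
    dsimp only [ζ2]
    split_ifs with h
    · exact hval v _
    · tauto
  -- signs of the three inner products
  have sab : Int.sign (∑ i : Fin 2, ζ2 a i * ζ2 b i) = S.sign a b := by
    rw [hsum]; exact sgn_eq _ _ hsab (hsg a b hab)
  have sbc : Int.sign (∑ i : Fin 2, ζ2 b i * ζ2 c i) = S.sign b c := by
    rw [hsum]; exact sgn_eq _ _ hsbc (hsg b c hbc)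
  have sca : Int.sign (∑ i : Fin 2, ζ2 c i * ζ2 a i) = S.sign c a := by
    rw [hsum]; exact sgn_eq _ _ hsca (hsg c a hca)
  have hprod : ((∑ i : Fin 2, ζ2 a i * ζ2 b i) *
      ((∑ i : Fin 2, ζ2 b i * ζ2 c i) * (∑ i : Fin 2, ζ2 c i * ζ2 a i))) < 0 := by
    have : Int.sign ((∑ i : Fin 2, ζ2 a i * ζ2 b i) *
        ((∑ i : Fin 2, ζ2 b i * ζ2 c i) * (∑ i : Fin 2, ζ2 c i * ζ2 a i))) = -1 := by
      rw [Int.sign_mul, Int.sign_mul, sab, sbc, sca]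
      linarith [hneg]
    exact Int.sign_eq_neg_one_iff_neg.mp this
  have hge := tri2 (ζ2 a 0) (ζ2 a 1) (ζ2 b 0) (ζ2 b 1) (ζ2 c 0) (ζ2 c 1)
    (hval2 a 0) (hval2 a 1) (hval2 b 0) (hval2 b 1) (hval2 c 0) (hval2 c 1)
  rw [Fin.sum_univ_two, Fin.sum_univ_two, Fin.sum_univ_two] at hprod
  exact absurd hprod (not_lt.mpr hge)
end

section
/- If signed graphs Σ₁ and Σ₁' are switching equivalent, then the HG-lexicographic products Σ₁[Σ₂] and Σ₁'[Σ₂] are switching equivalent, for any signed graph Σ₂. -/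
open Finset
open scoped Classical

variable {V V1 V2 W : Type*}

theorem stmt10 (S1 S1' : SGraph V1) (S2 : SGraph V2)
    (h : SwitchEquiv S1 S1') : SwitchEquiv (lexHG S1 S2) (lexHG S1' S2) := by
  obtain ⟨hG, η, hη, hsw⟩ := h
  refine ⟨?_, fun p => η p.1, fun p => hη p.1, ?_⟩
  · ext p q; simp only [lexHG, hG]
  · rintro p q (hadj | ⟨h1, h2⟩)
    · simp only [lexHG, if_neg hadj.ne]
      exact hsw _ _ hadj
    · simp only [lexHG, h1, if_pos rfl]
      rcases hη q.1 with e | e <;> simp [e]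
end
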